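/- The dual of the completely bounded norm of a t-tensor R equals its Minkowski gauge with respect to K(n,t): ‖R‖_{cb,*} = inf { w > 0 : R ∈ w·K(n,t) }. Equivalently, K(n,t) is the unit ball of the dual norm of ‖·‖_cb on the space of t-tensors. -/

import Mathlib

noncomputable section

/-- `d × d` real matrices, viewed as operators on Euclidean space (with operator norm). -/
abbrev Mat (d : ℕ) := EuclideanSpace ℝ (Fin d) →L[ℝ] EuclideanSpace ℝ (Fin d)

/-- The set `K(n,t)` of `t`-tensors of the form `(⟨u, A(i₁)⋯A(i_t) v⟩)_{i ∈ [n]^t}` with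
`u, v` unit vectors and `A` contraction-valued. -/
def Kset (n t : ℕ) : Set ((Fin t → Fin n) → ℝ) :=
  {R | ∃ (d : ℕ) (u v : EuclideanSpace ℝ (Fin d)) (A : Fin n → Mat d),
    ‖u‖ = 1 ∧ ‖v‖ = 1 ∧ (∀ j, ‖A j‖ ≤ 1) ∧
    ∀ i : Fin t → Fin n, R i = (inner ℝ u ((List.ofFn fun s => A (i s)).prod v) : ℝ)}

/-- The completely bounded norm of a `t`-tensor (scalar form):
`‖T‖_cb = sup { |∑_i T_i ⟨u, A(i₁)⋯A(i_t) v⟩| : u, v unit vectors, A contraction-valued }`. -/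
def cbNorm (n t : ℕ) (T : (Fin t → Fin n) → ℝ) : ℝ :=
  sSup {c : ℝ | ∃ (d : ℕ) (u v : EuclideanSpace ℝ (Fin d)) (A : Fin n → Mat d),
    ‖u‖ = 1 ∧ ‖v‖ = 1 ∧ (∀ j, ‖A j‖ ≤ 1) ∧
    c = |∑ i : Fin t → Fin n,
          T i * (inner ℝ u ((List.ofFn fun s => A (i s)).prod v) : ℝ)|}


set_option linter.unusedSectionVars false

section transport


variable {E F : Type*} [NormedAddCommGroup E] [InnerProductSpace ℝ E]
  [NormedAddCommGroup F] [InnerProductSpace ℝ F]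

def conjOp (e : E ≃ₗᵢ[ℝ] F) (A : E →L[ℝ] E) : F →L[ℝ] F :=
  e.toLinearIsometry.toContinuousLinearMap ∘L A ∘L e.symm.toLinearIsometry.toContinuousLinearMap

lemma conjOp_apply (e : E ≃ₗᵢ[ℝ] F) (A : E →L[ℝ] E) (y : F) :
    conjOp e A y = e (A (e.symm y)) := rfl

lemma conjOp_norm_le (e : E ≃ₗᵢ[ℝ] F) {A : E →L[ℝ] E} (hA : ‖A‖ ≤ 1) :
    ‖conjOp e A‖ ≤ 1 := by
  refine ContinuousLinearMap.opNorm_le_bound _ zero_le_one (fun y => ?_)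
  rw [conjOp_apply, e.norm_map]
  calc ‖A (e.symm y)‖ ≤ ‖A‖ * ‖e.symm y‖ := A.le_opNorm _
    _ ≤ 1 * ‖y‖ := by rw [e.symm.norm_map]; exact mul_le_mul_of_nonneg_right hA (norm_nonneg _)

lemma prod_conjOp (e : E ≃ₗᵢ[ℝ] F) (L : List (E →L[ℝ] E)) (x : E) :
    (L.map (conjOp e)).prod (e x) = e (L.prod x) := by
  induction L with
  | nil => simp
  | cons a l ih =>
      simp only [List.map_cons, List.prod_cons, ContinuousLinearMap.mul_apply]
      rw [ih, conjOp_apply, e.symm_apply_apply]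

lemma mem_Kset_of {n t : ℕ} (ι : Type) [Fintype ι]
    (u v : EuclideanSpace ℝ ι) (A : Fin n → (EuclideanSpace ℝ ι →L[ℝ] EuclideanSpace ℝ ι))
    (hu : ‖u‖ = 1) (hv : ‖v‖ = 1) (hA : ∀ j, ‖A j‖ ≤ 1)
    (R : (Fin t → Fin n) → ℝ)
    (hR : ∀ i : Fin t → Fin n,
      R i = (inner ℝ u ((List.ofFn fun s => A (i s)).prod v) : ℝ)) :
    R ∈ Kset n t := by
  set e : EuclideanSpace ℝ ι ≃ₗᵢ[ℝ] EuclideanSpace ℝ (Fin (Fintype.card ι)) :=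
    LinearIsometryEquiv.piLpCongrLeft 2 ℝ ℝ (Fintype.equivFin ι)
  refine ⟨Fintype.card ι, e u, e v, fun j => conjOp e (A j), by rw [e.norm_map, hu],
    by rw [e.norm_map, hv], fun j => conjOp_norm_le e (hA j), fun i => ?_⟩
  have : (List.ofFn fun s => conjOp e (A (i s))) = (List.ofFn fun s => A (i s)).map (conjOp e) := by
    rw [List.map_ofFn]; rfl
  rw [hR i, this, prod_conjOp, e.inner_map_map]

end transport

section blocks


variable {ι₁ ι₂ : Type} [Fintype ι₁] [Fintype ι₂]

def glue (x : EuclideanSpace ℝ ι₁) (y : EuclideanSpace ℝ ι₂) : EuclideanSpace ℝ (ι₁ ⊕ ι₂) :=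
  WithLp.toLp 2 (Sum.elim x.ofLp y.ofLp)

lemma glue_inl (x : EuclideanSpace ℝ ι₁) (y : EuclideanSpace ℝ ι₂) (a : ι₁) :
    glue x y (Sum.inl a) = x a := rfl

lemma glue_inr (x : EuclideanSpace ℝ ι₁) (y : EuclideanSpace ℝ ι₂) (b : ι₂) :
    glue x y (Sum.inr b) = y b := rfl

lemma inner_glue (x x' : EuclideanSpace ℝ ι₁) (y y' : EuclideanSpace ℝ ι₂) :
    (inner ℝ (glue x y) (glue x' y') : ℝ) = (inner ℝ x x' : ℝ) + (inner ℝ y y' : ℝ) := by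
  simp only [PiLp.inner_apply, RCLike.inner_apply, Fintype.sum_sum_type]
  rfl

lemma norm_glue_sq (x : EuclideanSpace ℝ ι₁) (y : EuclideanSpace ℝ ι₂) :
    ‖glue x y‖ ^ 2 = ‖x‖ ^ 2 + ‖y‖ ^ 2 := by
  rw [← real_inner_self_eq_norm_sq, ← real_inner_self_eq_norm_sq, ← real_inner_self_eq_norm_sq,
    inner_glue]

def leftPart (x : EuclideanSpace ℝ (ι₁ ⊕ ι₂)) : EuclideanSpace ℝ ι₁ := WithLp.toLp 2 fun a => x (Sum.inl a)

def rightPart (x : EuclideanSpace ℝ (ι₁ ⊕ ι₂)) : EuclideanSpace ℝ ι₂ := WithLp.toLp 2 fun b => x (Sum.inr b)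

lemma glue_parts (x : EuclideanSpace ℝ (ι₁ ⊕ ι₂)) : glue (leftPart x) (rightPart x) = x := by
  ext s; cases s <;> rfl

def blockOp (B₁ : EuclideanSpace ℝ ι₁ →L[ℝ] EuclideanSpace ℝ ι₁)
    (B₂ : EuclideanSpace ℝ ι₂ →L[ℝ] EuclideanSpace ℝ ι₂) :
    EuclideanSpace ℝ (ι₁ ⊕ ι₂) →L[ℝ] EuclideanSpace ℝ (ι₁ ⊕ ι₂) :=
  LinearMap.toContinuousLinearMap
  { toFun := fun x => glue (B₁ (leftPart x)) (B₂ (rightPart x))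
    map_add' := by
      intro x y
      show glue (B₁ (leftPart (x + y))) (B₂ (rightPart (x + y))) = _
      have hl : leftPart (x + y) = leftPart x + leftPart y := rfl
      have hr : rightPart (x + y) = rightPart x + rightPart y := rfl
      rw [hl, hr, map_add, map_add]
      ext s; cases s <;> rfl
    map_smul' := by
      intro c x
      simp only [RingHom.id_apply]
      show glue (B₁ (leftPart (c • x))) (B₂ (rightPart (c • x))) = _
      have hl : leftPart (c • x) = c • leftPart x := rfl
      have hr : rightPart (c • x) = c • rightPart x := rfl
      rw [hl, hr, map_smul, map_smul]
      ext s; cases s <;> rfl }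

lemma blockOp_apply (B₁ : EuclideanSpace ℝ ι₁ →L[ℝ] EuclideanSpace ℝ ι₁)
    (B₂ : EuclideanSpace ℝ ι₂ →L[ℝ] EuclideanSpace ℝ ι₂)
    (x : EuclideanSpace ℝ ι₁) (y : EuclideanSpace ℝ ι₂) :
    blockOp B₁ B₂ (glue x y) = glue (B₁ x) (B₂ y) := rfl

lemma blockOp_norm_le {B₁ : EuclideanSpace ℝ ι₁ →L[ℝ] EuclideanSpace ℝ ι₁}
    {B₂ : EuclideanSpace ℝ ι₂ →L[ℝ] EuclideanSpace ℝ ι₂}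
    (h₁ : ‖B₁‖ ≤ 1) (h₂ : ‖B₂‖ ≤ 1) : ‖blockOp B₁ B₂‖ ≤ 1 := by
  refine ContinuousLinearMap.opNorm_le_bound _ zero_le_one (fun x => ?_)
  rw [one_mul]
  have hx : blockOp B₁ B₂ x = glue (B₁ (leftPart x)) (B₂ (rightPart x)) := rfl
  have h1 : ‖B₁ (leftPart x)‖ ≤ ‖leftPart x‖ := by
    calc ‖B₁ (leftPart x)‖ ≤ ‖B₁‖ * ‖leftPart x‖ := B₁.le_opNorm _
      _ ≤ 1 * ‖leftPart x‖ := mul_le_mul_of_nonneg_right h₁ (norm_nonneg _)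
      _ = _ := one_mul _
  have h2 : ‖B₂ (rightPart x)‖ ≤ ‖rightPart x‖ := by
    calc ‖B₂ (rightPart x)‖ ≤ ‖B₂‖ * ‖rightPart x‖ := B₂.le_opNorm _
      _ ≤ 1 * ‖rightPart x‖ := mul_le_mul_of_nonneg_right h₂ (norm_nonneg _)
      _ = _ := one_mul _
  have hsq : ‖blockOp B₁ B₂ x‖ ^ 2 ≤ ‖x‖ ^ 2 := by
    rw [hx, norm_glue_sq]
    conv_rhs => rw [← glue_parts x]
    rw [norm_glue_sq]
    have := pow_le_pow_left₀ (norm_nonneg _) h1 2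
    have := pow_le_pow_left₀ (norm_nonneg _) h2 2
    linarith
  nlinarith [norm_nonneg (blockOp B₁ B₂ x), norm_nonneg x]

lemma prod_blockOp (L : List ((EuclideanSpace ℝ ι₁ →L[ℝ] EuclideanSpace ℝ ι₁) ×
    (EuclideanSpace ℝ ι₂ →L[ℝ] EuclideanSpace ℝ ι₂)))
    (x : EuclideanSpace ℝ ι₁) (y : EuclideanSpace ℝ ι₂) :
    (L.map fun p => blockOp p.1 p.2).prod (glue x y) =
      glue ((L.map Prod.fst).prod x) ((L.map Prod.snd).prod y) := by
  induction L with
  | nil => simp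
  | cons a l ih =>
      simp only [List.map_cons, List.prod_cons, ContinuousLinearMap.mul_apply]
      rw [ih, blockOp_apply]

end blocks

section Kfacts

variable {n t : ℕ}

lemma Kset_convex : Convex ℝ (Kset n t) := by
  rintro Q₁ ⟨d₁, u₁, v₁, A₁, hu₁, hv₁, hA₁, hQ₁⟩ Q₂ ⟨d₂, u₂, v₂, A₂, hu₂, hv₂, hA₂, hQ₂⟩
    a b ha hb hab
  refine mem_Kset_of (Fin d₁ ⊕ Fin d₂)
    (glue (Real.sqrt a • u₁) (Real.sqrt b • u₂))
    (glue (Real.sqrt a • v₁) (Real.sqrt b • v₂))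
    (fun j => blockOp (A₁ j) (A₂ j)) ?_ ?_
    (fun j => blockOp_norm_le (hA₁ j) (hA₂ j)) _ (fun i => ?_)
  · have h : ‖glue (Real.sqrt a • u₁) (Real.sqrt b • u₂)‖ ^ 2 = 1 := by
      rw [norm_glue_sq, norm_smul, norm_smul, mul_pow, mul_pow, hu₁, hu₂]
      simp [Real.norm_eq_abs, abs_of_nonneg (Real.sqrt_nonneg a),
        abs_of_nonneg (Real.sqrt_nonneg b), Real.sq_sqrt ha, Real.sq_sqrt hb, hab]
    nlinarith [norm_nonneg (glue (Real.sqrt a • u₁) (Real.sqrt b • u₂))]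
  · have h : ‖glue (Real.sqrt a • v₁) (Real.sqrt b • v₂)‖ ^ 2 = 1 := by
      rw [norm_glue_sq, norm_smul, norm_smul, mul_pow, mul_pow, hv₁, hv₂]
      simp [Real.norm_eq_abs, abs_of_nonneg (Real.sqrt_nonneg a),
        abs_of_nonneg (Real.sqrt_nonneg b), Real.sq_sqrt ha, Real.sq_sqrt hb, hab]
    nlinarith [norm_nonneg (glue (Real.sqrt a • v₁) (Real.sqrt b • v₂))]
  · have hmap : (List.ofFn fun s => blockOp (A₁ (i s)) (A₂ (i s))) =
        (List.ofFn fun s => (A₁ (i s), A₂ (i s))).map (fun p => blockOp p.1 p.2) := by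
      rw [List.map_ofFn]; rfl
    have h1 : ((List.ofFn fun s => (A₁ (i s), A₂ (i s))).map Prod.fst) =
        List.ofFn fun s => A₁ (i s) := by rw [List.map_ofFn]; rfl
    have h2 : ((List.ofFn fun s => (A₁ (i s), A₂ (i s))).map Prod.snd) =
        List.ofFn fun s => A₂ (i s) := by rw [List.map_ofFn]; rfl
    rw [hmap, prod_blockOp, h1, h2]
    rw [map_smul, map_smul, inner_glue]
    rw [real_inner_smul_left, real_inner_smul_right, real_inner_smul_left,
      real_inner_smul_right]
    rw [← mul_assoc, ← mul_assoc, Real.mul_self_sqrt ha, Real.mul_self_sqrt hb]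
    simp only [Pi.add_apply, Pi.smul_apply, smul_eq_mul]
    rw [hQ₁ i, hQ₂ i]

lemma Kset_zero_mem : (0 : (Fin t → Fin n) → ℝ) ∈ Kset n t := by
  refine ⟨2, EuclideanSpace.single 0 1, EuclideanSpace.single 1 1, fun _ => 0, ?_, ?_, ?_, ?_⟩
  · simp [EuclideanSpace.norm_single]
  · simp [EuclideanSpace.norm_single]
  · intro j; simp
  · intro i
    cases t with
    | zero => simp [EuclideanSpace.inner_single_left, EuclideanSpace.single_apply]
    | succ k =>
        rw [List.ofFn_succ]
        simp

lemma Kset_neg_mem {Q : (Fin t → Fin n) → ℝ} (hQ : Q ∈ Kset n t) : -Q ∈ Kset n t := by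
  obtain ⟨d, u, v, A, hu, hv, hA, h⟩ := hQ
  exact ⟨d, -u, v, A, by rwa [norm_neg], hv, hA,
    fun i => by rw [Pi.neg_apply, h i, inner_neg_left]⟩

end Kfacts

section delta


variable {n t : ℕ}

def shiftA (i₀ : Fin t → Fin n) (j : Fin n) :
    EuclideanSpace ℝ (Fin (t+1)) →L[ℝ] EuclideanSpace ℝ (Fin (t+1)) :=
  LinearMap.toContinuousLinearMap
  { toFun := fun x => WithLp.toLp 2 fun s =>
      if h : (s : ℕ) < t then (if i₀ ⟨s, h⟩ = j then x ⟨(s : ℕ) + 1, by omega⟩ else 0) else 0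
    map_add' := by
      intro x y; ext s
      show _ = (_ : EuclideanSpace ℝ (Fin (t+1))) s
      rw [PiLp.add_apply]
      by_cases h : (s : ℕ) < t
      · by_cases h2 : i₀ ⟨s, h⟩ = j <;> simp [h, h2, PiLp.add_apply]
      · simp [h]
    map_smul' := by
      intro c x; ext s
      show _ = (_ : EuclideanSpace ℝ (Fin (t+1))) s
      rw [PiLp.smul_apply]
      by_cases h : (s : ℕ) < t
      · by_cases h2 : i₀ ⟨s, h⟩ = j <;> simp [h, h2, PiLp.smul_apply]
      · simp [h] }

lemma shiftA_apply (i₀ : Fin t → Fin n) (j : Fin n) (x : EuclideanSpace ℝ (Fin (t+1)))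
    (s : Fin (t+1)) :
    shiftA i₀ j x s =
      if h : (s : ℕ) < t then (if i₀ ⟨s, h⟩ = j then x ⟨(s : ℕ) + 1, by omega⟩ else 0) else 0 :=
  rfl

lemma shiftA_norm_le (i₀ : Fin t → Fin n) (j : Fin n) : ‖shiftA i₀ j‖ ≤ 1 := by
  refine ContinuousLinearMap.opNorm_le_bound _ zero_le_one (fun x => ?_)
  rw [one_mul]
  have hlt : ∀ s : Fin (t+1), (s:ℕ) < t → (s:ℕ) + 1 < t + 1 := fun _ h => by omega
  set σ : Fin (t+1) → Fin (t+1) := fun s =>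
    if h : (s : ℕ) < t then ⟨(s : ℕ) + 1, hlt s h⟩ else ⟨0, by omega⟩ with hσ
  have hσ1 : ∀ (s : Fin (t+1)) (h : (s:ℕ) < t), σ s = ⟨(s : ℕ) + 1, hlt s h⟩ :=
    fun s h => dif_pos h
  have hσ2 : ∀ (s : Fin (t+1)), ¬ (s:ℕ) < t → σ s = ⟨0, by omega⟩ := fun s h => dif_neg h
  have hinj : Function.Injective σ := by
    intro s s' hss
    have h1 := s.2
    have h2 := s'.2
    apply Fin.ext
    by_cases ha : (s:ℕ) < t <;> by_cases hb : (s':ℕ) < t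
    · rw [hσ1 s ha, hσ1 s' hb] at hss
      have : (s:ℕ) + 1 = (s':ℕ) + 1 := congrArg Fin.val hss
      omega
    · rw [hσ1 s ha, hσ2 s' hb] at hss
      have : (s:ℕ) + 1 = 0 := congrArg Fin.val hss
      omega
    · rw [hσ2 s ha, hσ1 s' hb] at hss
      have : 0 = (s':ℕ) + 1 := congrArg Fin.val hss
      omega
    · omega
  have hbij : Function.Bijective σ := (Finite.injective_iff_bijective).mp hinj
  rw [EuclideanSpace.norm_eq, EuclideanSpace.norm_eq]
  apply Real.sqrt_le_sqrt
  have step : ∀ s : Fin (t+1), ‖shiftA i₀ j x s‖ ^ 2 ≤ ‖x (σ s)‖ ^ 2 := by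
    intro s
    rw [shiftA_apply]
    by_cases h : (s : ℕ) < t
    · rw [hσ1 s h]
      by_cases h2 : i₀ ⟨s, h⟩ = j
      · rw [dif_pos h, if_pos h2]
      · rw [dif_pos h, if_neg h2, norm_zero, zero_pow two_ne_zero]
        positivity
    · rw [dif_neg h, norm_zero, zero_pow two_ne_zero]
      positivity
  calc ∑ s, ‖shiftA i₀ j x s‖ ^ 2 ≤ ∑ s, ‖x (σ s)‖ ^ 2 := Finset.sum_le_sum fun s _ => step s
    _ = ∑ s, ‖x s‖ ^ 2 := Fintype.sum_bijective σ hbij _ _ (fun s => rfl)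

lemma shiftA_single (i₀ : Fin t → Fin n) (j : Fin n) (p : ℕ) (hp : p < t) :
    shiftA i₀ j (EuclideanSpace.single (⟨p + 1, by omega⟩ : Fin (t+1)) 1) =
      if i₀ ⟨p, hp⟩ = j then EuclideanSpace.single (⟨p, by omega⟩ : Fin (t+1)) (1:ℝ) else 0 := by
  by_cases h2 : i₀ ⟨p, hp⟩ = j
  · rw [if_pos h2]
    ext s
    rw [shiftA_apply]
    by_cases hsp : (s : ℕ) = p
    · have h : (s : ℕ) < t := by omega
      rw [dif_pos h]
      have he : (⟨(s : ℕ), h⟩ : Fin t) = ⟨p, hp⟩ := Fin.ext hsp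
      rw [he, if_pos h2, EuclideanSpace.single_apply, EuclideanSpace.single_apply,
        if_pos (Fin.ext (show (s:ℕ) + 1 = p + 1 by omega)), if_pos (Fin.ext hsp)]
    · have hz : EuclideanSpace.single (⟨p, by omega⟩ : Fin (t+1)) (1:ℝ) s = 0 := by
        rw [EuclideanSpace.single_apply, if_neg]
        intro hc
        exact hsp (by simpa [Fin.ext_iff] using hc)
      rw [hz]
      by_cases h : (s : ℕ) < t
      · rw [dif_pos h]
        have hz2 : EuclideanSpace.single (⟨p + 1, by omega⟩ : Fin (t+1)) (1:ℝ)
            ⟨(s : ℕ) + 1, by omega⟩ = 0 := by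
          rw [EuclideanSpace.single_apply, if_neg]
          intro hc
          exact hsp (by simpa [Fin.ext_iff] using hc)
        rw [hz2, ite_self]
      · rw [dif_neg h]
  · rw [if_neg h2]
    ext s
    rw [shiftA_apply]
    show _ = (0 : ℝ)
    by_cases h : (s : ℕ) < t
    · rw [dif_pos h]
      by_cases hsp : (s : ℕ) = p
      · have he : (⟨(s : ℕ), h⟩ : Fin t) = ⟨p, hp⟩ := Fin.ext hsp
        rw [he, if_neg h2]
      · have hz2 : EuclideanSpace.single (⟨p + 1, by omega⟩ : Fin (t+1)) (1:ℝ)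
            ⟨(s : ℕ) + 1, by omega⟩ = 0 := by
          rw [EuclideanSpace.single_apply, if_neg]
          intro hc
          exact hsp (by simpa [Fin.ext_iff] using hc)
        rw [hz2, ite_self]
    · rw [dif_neg h]

lemma shiftA_prod_drop (i₀ i : Fin t → Fin n) :
    ∀ k, k ≤ t →
      (((List.ofFn fun s : Fin t => shiftA i₀ (i s)).drop (t - k)).prod)
          (EuclideanSpace.single (⟨t, by omega⟩ : Fin (t+1)) 1) =
        if (∀ s : Fin t, t - k ≤ (s : ℕ) → i s = i₀ s) then
          EuclideanSpace.single (⟨t - k, by omega⟩ : Fin (t+1)) 1 else 0 := by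
  intro k
  induction k with
  | zero =>
      intro _
      rw [List.drop_eq_nil_of_le (by simp [List.length_ofFn])]
      rw [if_pos (fun (s : Fin t) hs => absurd s.2 (by omega))]
      simp only [List.prod_nil, ContinuousLinearMap.one_apply]
      rfl
  | succ k ih =>
      intro hk
      have hlen : t - (k+1) < (List.ofFn fun s : Fin t => shiftA i₀ (i s)).length := by
        rw [List.length_ofFn]; omega
      rw [List.drop_eq_getElem_cons hlen, List.getElem_ofFn, List.prod_cons,
        ContinuousLinearMap.mul_apply]
      have hmk : t - (k+1) + 1 = t - k := by omega
      rw [hmk, ih (by omega)]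
      set m : ℕ := t - (k+1) with hm
      have hmt : m < t := by omega
      by_cases hC : ∀ s : Fin t, t - k ≤ (s : ℕ) → i s = i₀ s
      · rw [if_pos hC]
        have hsingle := shiftA_single i₀ (i ⟨m, hmt⟩) m hmt
        have hidx : (⟨m + 1, by omega⟩ : Fin (t+1)) = ⟨t - k, by omega⟩ := by
          apply Fin.ext
          show m + 1 = t - k
          omega
        rw [hidx] at hsingle
        rw [hsingle]
        by_cases hmm : i ⟨m, hmt⟩ = i₀ ⟨m, hmt⟩
        · rw [if_pos hmm.symm, if_pos]
          intro s hs
          rcases Nat.eq_or_lt_of_le hs with h | h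
          · have : s = ⟨m, hmt⟩ := by
              apply Fin.ext
              show (s : ℕ) = m
              omega
            rw [this]; exact hmm
          · exact hC s (by omega)
        · rw [if_neg (fun h => hmm h.symm), if_neg]
          intro hall
          exact hmm (hall ⟨m, hmt⟩ (by show t - (k+1) ≤ m; omega))
      · rw [if_neg hC, map_zero, if_neg]
        intro hall
        exact hC fun s hs => hall s (by omega)

lemma Kset_delta_mem (i₀ : Fin t → Fin n) :
    (fun i => if i = i₀ then (1:ℝ) else 0) ∈ Kset n t := by
  refine ⟨t + 1, EuclideanSpace.single ⟨0, by omega⟩ 1,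
    EuclideanSpace.single ⟨t, by omega⟩ 1, fun j => shiftA i₀ j, ?_, ?_,
    fun j => shiftA_norm_le i₀ j, fun i => ?_⟩
  · simp [EuclideanSpace.norm_single]
  · simp [EuclideanSpace.norm_single]
  show (if i = i₀ then (1:ℝ) else 0) =
    (inner ℝ (EuclideanSpace.single (⟨0, by omega⟩ : Fin (t+1)) (1:ℝ))
      ((List.ofFn fun s => shiftA i₀ (i s)).prod
        (EuclideanSpace.single (⟨t, by omega⟩ : Fin (t+1)) (1:ℝ))) : ℝ)
  have hlist : (List.ofFn fun s => shiftA i₀ (i s)) =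
      (List.ofFn fun s => shiftA i₀ (i s)).drop (t - t) := by
    rw [Nat.sub_self, List.drop_zero]
  rw [hlist, shiftA_prod_drop i₀ i t (le_refl t), EuclideanSpace.inner_single_left]
  simp only [map_one, one_mul]
  by_cases hii : i = i₀
  · rw [if_pos hii, if_pos (show ∀ s : Fin t, t - t ≤ (s:ℕ) → i s = i₀ s by
      intro s _; rw [hii])]
    rw [EuclideanSpace.single_apply, if_pos (Fin.ext (show (0:ℕ) = t - t by omega))]
  · rw [if_neg hii, if_neg (show ¬ ∀ s : Fin t, t - t ≤ (s:ℕ) → i s = i₀ s by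
      intro hall
      exact hii (funext fun s => hall s (by omega)))]
    rfl

end delta

section analytic

variable {n t : ℕ}

lemma list_prod_norm_le {E : Type*} [NormedAddCommGroup E] [NormedSpace ℝ E]
    (L : List (E →L[ℝ] E)) (hL : ∀ B ∈ L, ‖B‖ ≤ 1) (x : E) : ‖L.prod x‖ ≤ ‖x‖ := by
  induction L with
  | nil => simp
  | cons a l ih =>
      rw [List.prod_cons, ContinuousLinearMap.mul_apply]
      calc ‖a (l.prod x)‖ ≤ ‖a‖ * ‖l.prod x‖ := a.le_opNorm _
        _ ≤ 1 * ‖x‖ := by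
            apply mul_le_mul (hL a (List.mem_cons_self))
              (ih fun B hB => hL B (List.mem_cons_of_mem _ hB)) (norm_nonneg _) zero_le_one
        _ = ‖x‖ := one_mul _

lemma Kset_entry_abs_le {Q : (Fin t → Fin n) → ℝ} (hQ : Q ∈ Kset n t)
    (i : Fin t → Fin n) : |Q i| ≤ 1 := by
  obtain ⟨d, u, v, A, hu, hv, hA, h⟩ := hQ
  rw [h i]
  calc |(inner ℝ u ((List.ofFn fun s => A (i s)).prod v) : ℝ)|
      ≤ ‖u‖ * ‖(List.ofFn fun s => A (i s)).prod v‖ := abs_real_inner_le_norm _ _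
    _ ≤ 1 * 1 := by
        apply mul_le_mul (le_of_eq hu) ?_ (norm_nonneg _) zero_le_one
        calc ‖(List.ofFn fun s => A (i s)).prod v‖ ≤ ‖v‖ := by
              apply list_prod_norm_le
              intro B hB
              rw [List.mem_ofFn] at hB
              obtain ⟨s, rfl⟩ := hB
              exact hA _
          _ = 1 := hv
    _ = 1 := one_mul _

lemma cbNorm_eq (T : (Fin t → Fin n) → ℝ) :
    cbNorm n t T = sSup ((fun Q => |∑ i, T i * Q i|) '' Kset n t) := by
  unfold cbNorm
  congr 1
  ext c
  constructor
  · rintro ⟨d, u, v, A, hu, hv, hA, rfl⟩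
    exact ⟨fun i => (inner ℝ u ((List.ofFn fun s => A (i s)).prod v) : ℝ),
      ⟨d, u, v, A, hu, hv, hA, fun i => rfl⟩, rfl⟩
  · rintro ⟨Q, ⟨d, u, v, A, hu, hv, hA, hQ⟩, rfl⟩
    refine ⟨d, u, v, A, hu, hv, hA, ?_⟩
    show |∑ i : Fin t → Fin n, T i * Q i| = _
    have hsum : (∑ i, T i * Q i) =
        ∑ i, T i * (inner ℝ u ((List.ofFn fun s => A (i s)).prod v) : ℝ) :=
      Finset.sum_congr rfl fun i _ => by rw [hQ i]
    rw [hsum]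

lemma cbNorm_bddAbove (T : (Fin t → Fin n) → ℝ) :
    BddAbove ((fun Q => |∑ i, T i * Q i|) '' Kset n t) := by
  refine ⟨∑ i, |T i|, ?_⟩
  rintro c ⟨Q, hQ, rfl⟩
  calc |∑ i, T i * Q i| ≤ ∑ i, |T i * Q i| := Finset.abs_sum_le_sum_abs _ _
    _ ≤ ∑ i, |T i| := by
        apply Finset.sum_le_sum
        intro i _
        rw [abs_mul]
        calc |T i| * |Q i| ≤ |T i| * 1 :=
              mul_le_mul_of_nonneg_left (Kset_entry_abs_le hQ i) (abs_nonneg _)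
          _ = |T i| := mul_one _

lemma abs_dot_le_cbNorm {T Q : (Fin t → Fin n) → ℝ} (hQ : Q ∈ Kset n t) :
    |∑ i, T i * Q i| ≤ cbNorm n t T := by
  rw [cbNorm_eq]
  exact le_csSup (cbNorm_bddAbove T) ⟨Q, hQ, rfl⟩

lemma cbNorm_le {T : (Fin t → Fin n) → ℝ} {u : ℝ}
    (h : ∀ Q ∈ Kset n t, |∑ i, T i * Q i| ≤ u) : cbNorm n t T ≤ u := by
  rw [cbNorm_eq]
  refine csSup_le ⟨_, Set.mem_image_of_mem _ Kset_zero_mem⟩ ?_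
  rintro c ⟨Q, hQ, rfl⟩
  exact h Q hQ

lemma abs_entry_le_cbNorm (T : (Fin t → Fin n) → ℝ) (i₀ : Fin t → Fin n) :
    |T i₀| ≤ cbNorm n t T := by
  have h := abs_dot_le_cbNorm (T := T) (Kset_delta_mem i₀)
  have heq : ∑ i, T i * (if i = i₀ then (1:ℝ) else 0) = T i₀ := by
    simp [mul_ite, Finset.sum_ite_eq']
  rwa [heq] at h

lemma Kset_l1_mem {z : (Fin t → Fin n) → ℝ} (hz : ∑ i, |z i| ≤ 1) : z ∈ Kset n t := by
  classical
  set δ : (Fin t → Fin n) → ((Fin t → Fin n) → ℝ) :=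
    fun i₀ => fun i => if i = i₀ then (1:ℝ) else 0 with hδ
  set w : Option (Fin t → Fin n) → ℝ :=
    fun o => o.elim (1 - ∑ i, |z i|) fun i => |z i| with hw
  set p : Option (Fin t → Fin n) → ((Fin t → Fin n) → ℝ) :=
    fun o => o.elim 0 fun i => if 0 ≤ z i then δ i else -δ i with hp
  have h₀ : ∀ o ∈ (Finset.univ : Finset (Option (Fin t → Fin n))), 0 ≤ w o := by
    intro o _
    cases o with
    | none => simp only [hw, Option.elim]; linarith
    | some i => simp only [hw, Option.elim]; exact abs_nonneg _
  have h₁ : ∑ o : Option (Fin t → Fin n), w o = 1 := by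
    rw [Fintype.sum_option]
    simp only [hw, Option.elim]
    ring
  have hpK : ∀ o ∈ (Finset.univ : Finset (Option (Fin t → Fin n))), p o ∈ Kset n t := by
    intro o _
    cases o with
    | none => exact Kset_zero_mem
    | some i =>
        simp only [hp, Option.elim]
        by_cases hzi : 0 ≤ z i
        · rw [if_pos hzi]; exact Kset_delta_mem i
        · rw [if_neg hzi]; exact Kset_neg_mem (Kset_delta_mem i)
  have hmem := Kset_convex.sum_mem h₀ h₁ hpK
  have hsum : ∑ o : Option (Fin t → Fin n), w o • p o = z := by
    rw [Fintype.sum_option]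
    have h0 : w none • p none = 0 := by simp [hw, hp]
    rw [h0, zero_add]
    have hterm : ∀ i : Fin t → Fin n, w (some i) • p (some i) = z i • δ i := by
      intro i
      by_cases hzi : 0 ≤ z i
      · simp [hw, hp, hzi, abs_of_nonneg hzi]
      · push_neg at hzi
        simp only [hw, hp, if_neg (not_le.mpr hzi), Option.elim]
        rw [abs_of_neg hzi, smul_neg, ← neg_smul, neg_neg]
    rw [Finset.sum_congr rfl fun i _ => hterm i]
    funext j
    rw [Finset.sum_apply]
    simp [hδ, Pi.smul_apply, smul_eq_mul, mul_ite, Finset.sum_ite_eq]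
  rwa [hsum] at hmem

lemma Kset_shrink {x : (Fin t → Fin n) → ℝ} (hx : x ∈ closure (Kset n t)) {l : ℝ}
    (hl0 : 0 < l) (hl1 : l < 1) : l • x ∈ Kset n t := by
  classical
  set N : ℝ := (Fintype.card (Fin t → Fin n) : ℝ) with hN
  have hN0 : 0 ≤ N := Nat.cast_nonneg _
  have hden : 0 < l * N + 1 := by positivity
  have hε : 0 < (1 - l) / (l * N + 1) := div_pos (by linarith) hden
  obtain ⟨Q, hQK, hdist⟩ := Metric.mem_closure_iff.mp hx _ hε
  set z : (Fin t → Fin n) → ℝ := (l / (1 - l)) • (x - Q) with hzdef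
  have hz1 : ∑ i, |z i| ≤ 1 := by
    have hterm : ∀ i : Fin t → Fin n, |z i| ≤ l / (l * N + 1) := by
      intro i
      have h1 : |x i - Q i| ≤ (1 - l) / (l * N + 1) := by
        have := dist_le_pi_dist x Q i
        rw [Real.dist_eq] at this
        linarith [le_of_lt hdist]
      have h2 : z i = (l / (1 - l)) * (x i - Q i) := rfl
      rw [h2, abs_mul, abs_of_pos (div_pos hl0 (by linarith))]
      calc l / (1 - l) * |x i - Q i| ≤ l / (1 - l) * ((1 - l) / (l * N + 1)) :=
            mul_le_mul_of_nonneg_left h1 (le_of_lt (div_pos hl0 (by linarith)))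
        _ = l / (l * N + 1) := by
            rw [div_mul_div_comm, mul_comm l (1 - l),
              mul_div_mul_left _ _ (show (1:ℝ) - l ≠ 0 by intro h; rw [sub_eq_zero] at h; linarith)]
    calc ∑ i, |z i| ≤ ∑ _i : Fin t → Fin n, l / (l * N + 1) :=
          Finset.sum_le_sum fun i _ => hterm i
      _ = N * (l / (l * N + 1)) := by
          rw [Finset.sum_const, nsmul_eq_mul, Finset.card_univ, hN]
      _ ≤ 1 := by
          rw [mul_div_assoc', div_le_one hden]
          nlinarith
  have hzK := Kset_l1_mem hz1
  have hdecomp : l • x = l • Q + (1 - l) • z := by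
    rw [hzdef, smul_smul]
    rw [show (1 - l) * (l / (1 - l)) = l from by
      rw [mul_comm, div_mul_cancel₀ _ (show (1:ℝ) - l ≠ 0 by intro h; rw [sub_eq_zero] at h; linarith)]]
    rw [smul_sub]
    abel
  rw [hdecomp]
  exact Kset_convex hQK hzK (le_of_lt hl0) (by linarith) (by ring)

end analytic

/-- The dual of the completely bounded norm of a `t`-tensor `R` equals its
Minkowski gauge with respect to `K(n,t)`. -/
theorem cb_dual_eq_gauge_Kset (n t : ℕ) (R : (Fin t → Fin n) → ℝ) :
    sSup {c : ℝ | ∃ T : (Fin t → Fin n) → ℝ, cbNorm n t T ≤ 1 ∧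
        c = ∑ i : Fin t → Fin n, R i * T i} =
    sInf {w : ℝ | 0 < w ∧ ∃ Q ∈ Kset n t, R = w • Q} := by
  classical
  set S : Set ℝ := {c : ℝ | ∃ T : (Fin t → Fin n) → ℝ, cbNorm n t T ≤ 1 ∧
      c = ∑ i : Fin t → Fin n, R i * T i} with hSdef
  set W : Set ℝ := {w : ℝ | 0 < w ∧ ∃ Q ∈ Kset n t, R = w • Q} with hWdef
  show sSup S = sInf W
  have hS0 : (0:ℝ) ∈ S := by
    refine ⟨0, ?_, by simp⟩
    apply cbNorm_le
    intro Q hQ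
    simp
  have hSne : S.Nonempty := ⟨0, hS0⟩
  have hSbd : BddAbove S := by
    refine ⟨∑ i, |R i|, ?_⟩
    rintro c ⟨T, hT, rfl⟩
    apply Finset.sum_le_sum
    intro i _
    calc R i * T i ≤ |R i * T i| := le_abs_self _
      _ = |R i| * |T i| := abs_mul _ _
      _ ≤ |R i| * 1 :=
          mul_le_mul_of_nonneg_left (le_trans (abs_entry_le_cbNorm T i) hT) (abs_nonneg _)
      _ = |R i| := mul_one _
  have hWne : W.Nonempty := by
    set w₀ : ℝ := (∑ i, |R i|) + 1 with hw₀
    have hsum0 : 0 ≤ ∑ i, |R i| := Finset.sum_nonneg fun i _ => abs_nonneg _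
    have hw₀pos : 0 < w₀ := by rw [hw₀]; linarith
    refine ⟨w₀, hw₀pos, w₀⁻¹ • R, ?_, (smul_inv_smul₀ (ne_of_gt hw₀pos) R).symm⟩
    apply Kset_l1_mem
    have habs : ∀ i : Fin t → Fin n, |(w₀⁻¹ • R) i| = w₀⁻¹ * |R i| := fun i => by
      rw [Pi.smul_apply, smul_eq_mul, abs_mul, abs_of_pos (inv_pos.mpr hw₀pos)]
    rw [Finset.sum_congr rfl fun i _ => habs i, ← Finset.mul_sum]
    have hle : (∑ i, |R i|) ≤ w₀ := by rw [hw₀]; linarith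
    calc w₀⁻¹ * ∑ i, |R i| ≤ w₀⁻¹ * w₀ :=
          mul_le_mul_of_nonneg_left hle (le_of_lt (inv_pos.mpr hw₀pos))
      _ = 1 := inv_mul_cancel₀ (ne_of_gt hw₀pos)
  have hWbd : BddBelow W := ⟨0, fun w hw => le_of_lt hw.1⟩
  apply le_antisymm
  · apply csSup_le hSne
    rintro c ⟨T, hT, rfl⟩
    apply le_csInf hWne
    rintro w ⟨hwpos, Q, hQ, hRw⟩
    have h1 : ∑ i, R i * T i = w * ∑ i, T i * Q i := by
      rw [Finset.mul_sum]
      apply Finset.sum_congr rfl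
      intro i _
      rw [hRw]
      simp only [Pi.smul_apply, smul_eq_mul]
      ring
    rw [h1]
    calc w * ∑ i, T i * Q i ≤ w * 1 :=
          mul_le_mul_of_nonneg_left
            (le_trans (le_trans (le_abs_self _) (abs_dot_le_cbNorm hQ)) hT) (le_of_lt hwpos)
      _ = w := mul_one _
  · by_contra hlt
    push_neg at hlt
    have hc0 : 0 ≤ sSup S := le_csSup hSbd hS0
    set c' : ℝ := (sSup S + sInf W)/2 with hc'
    have hc'1 : sSup S < c' := by rw [hc']; linarith
    have hc'2 : c' < sInf W := by rw [hc']; linarith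
    have hc'pos : 0 < c' := lt_of_le_of_lt hc0 hc'1
    by_cases hmemC : c'⁻¹ • R ∈ closure (Kset n t)
    · set c'' : ℝ := (c' + sInf W)/2 with hc''
      have h1 : c' < c'' := by rw [hc'']; linarith
      have h2 : c'' < sInf W := by rw [hc'']; linarith
      have hc''pos : 0 < c'' := lt_trans hc'pos h1
      have hlK : (c'/c'') • (c'⁻¹ • R) ∈ Kset n t :=
        Kset_shrink hmemC (div_pos hc'pos hc''pos) ((div_lt_one hc''pos).mpr h1)
      have heq : (c'/c'') • (c'⁻¹ • R) = c''⁻¹ • R := by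
        rw [smul_smul]
        congr 1
        rw [div_eq_mul_inv, mul_comm c' c''⁻¹, mul_assoc,
          mul_inv_cancel₀ (ne_of_gt hc'pos), mul_one]
      have hc''W : c'' ∈ W :=
        ⟨hc''pos, c''⁻¹ • R, heq ▸ hlK, (smul_inv_smul₀ (ne_of_gt hc''pos) R).symm⟩
      exact absurd (csInf_le hWbd hc''W) (not_le.mpr h2)
    · obtain ⟨f, u, hfK, hfR⟩ := geometric_hahn_banach_closed_point
        Kset_convex.closure isClosed_closure hmemC
      set T : (Fin t → Fin n) → ℝ := fun i => f (Pi.single i 1) with hTdef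
      have hfeq : ∀ Q : (Fin t → Fin n) → ℝ, f Q = ∑ i, T i * Q i := by
        intro Q
        have hrep : Q = ∑ i : Fin t → Fin n, Q i • (Pi.single i (1:ℝ) : (Fin t → Fin n) → ℝ) := by
          funext j
          rw [Finset.sum_apply]
          simp [Pi.single_apply, mul_ite, Finset.sum_ite_eq]
        conv_lhs => rw [hrep]
        rw [map_sum]
        apply Finset.sum_congr rfl
        intro i _
        rw [map_smul, smul_eq_mul, mul_comm]
      have hu_pos : 0 < u := by
        have h0 := hfK 0 (subset_closure Kset_zero_mem)
        rwa [map_zero] at h0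
      have habs : ∀ Q ∈ Kset n t, |∑ i, T i * Q i| ≤ u := by
        intro Q hQ
        rw [abs_le]
        constructor
        · have hneg := hfK (-Q) (subset_closure (Kset_neg_mem hQ))
          rw [map_neg, hfeq] at hneg
          linarith
        · rw [← hfeq]
          exact le_of_lt (hfK Q (subset_closure hQ))
      have hcb_le : cbNorm n t T ≤ u := cbNorm_le habs
      have hs_pos : 0 < cbNorm n t T := by
        rcases lt_or_ge 0 (cbNorm n t T) with h | h
        · exact h
        · exfalso
          have hT0 : ∀ i, T i = 0 := by
            intro i
            have h1 := abs_entry_le_cbNorm T i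
            have habs0 : |T i| ≤ 0 := le_trans h1 h
            exact abs_eq_zero.mp (le_antisymm habs0 (abs_nonneg _))
          have hz : f (c'⁻¹ • R) = 0 := by
            rw [hfeq]
            apply Finset.sum_eq_zero
            intro i _
            rw [hT0 i, zero_mul]
          rw [hz] at hfR
          linarith
      set s := cbNorm n t T with hsdef
      have hT'cb : cbNorm n t (s⁻¹ • T) ≤ 1 := by
        apply cbNorm_le
        intro Q hQ
        have h1 : |∑ i, T i * Q i| ≤ s := abs_dot_le_cbNorm hQ
        have h2 : ∑ i, (s⁻¹ • T) i * Q i = s⁻¹ * ∑ i, T i * Q i := by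
          rw [Finset.mul_sum]
          apply Finset.sum_congr rfl
          intro i _
          rw [Pi.smul_apply, smul_eq_mul]
          ring
        rw [h2, abs_mul, abs_of_pos (inv_pos.mpr hs_pos)]
        calc s⁻¹ * |∑ i, T i * Q i| ≤ s⁻¹ * s :=
              mul_le_mul_of_nonneg_left h1 (le_of_lt (inv_pos.mpr hs_pos))
          _ = 1 := inv_mul_cancel₀ (ne_of_gt hs_pos)
      have hdot : c' * u < ∑ i, T i * R i := by
        have hfc : f (c'⁻¹ • R) = c'⁻¹ * ∑ i, T i * R i := by
          rw [hfeq, Finset.mul_sum]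
          apply Finset.sum_congr rfl
          intro i _
          rw [Pi.smul_apply, smul_eq_mul]
          ring
        have h3 := hfR
        rw [hfc] at h3
        calc c' * u < c' * (c'⁻¹ * ∑ i, T i * R i) := mul_lt_mul_of_pos_left h3 hc'pos
          _ = ∑ i, T i * R i := by
              rw [← mul_assoc, mul_inv_cancel₀ (ne_of_gt hc'pos), one_mul]
      have helem : (∑ i, R i * (s⁻¹ • T) i) ∈ S := ⟨s⁻¹ • T, hT'cb, rfl⟩
      have hgt : c' < ∑ i, R i * (s⁻¹ • T) i := by
        have heq2 : ∑ i, R i * (s⁻¹ • T) i = s⁻¹ * ∑ i, T i * R i := by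
          rw [Finset.mul_sum]
          apply Finset.sum_congr rfl
          intro i _
          rw [Pi.smul_apply, smul_eq_mul]
          ring
        rw [heq2]
        have hsu : c' * s ≤ c' * u := mul_le_mul_of_nonneg_left hcb_le (le_of_lt hc'pos)
        have hlt2 : c' * s < ∑ i, T i * R i := lt_of_le_of_lt hsu hdot
        calc c' = s⁻¹ * (s * c') := by
              rw [← mul_assoc, inv_mul_cancel₀ (ne_of_gt hs_pos), one_mul]
          _ < s⁻¹ * ∑ i, T i * R i := by
              apply mul_lt_mul_of_pos_left ?_ (inv_pos.mpr hs_pos)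
              calc s * c' = c' * s := mul_comm _ _
                _ < _ := hlt2
      exact absurd (le_csSup hSbd helem) (not_le.mpr (lt_trans hc'1 hgt))
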